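/- Let 0 < α < 1 and γ > 0, and set k(t) = g_{1−α}(t) e^{−γ t} and l(t) = g_α(t) e^{−γ t} + γ ∫_0^t g_α(τ) e^{−γ τ} dτ for t > 0. Then (k ∗ l)(t) = 1 for all t > 0; that is, the tempered kernels (k,l) form a Sonine pair. -/

import Mathlib

open MeasureTheory Set

/-- Laplace convolution on `(0, ∞)`: `(f ∗ g)(t) = ∫_0^t f(t−τ) g(τ) dτ`. -/
noncomputable def lconv (f g : ℝ → ℝ) (t : ℝ) : ℝ := ∫ τ in (0:ℝ)..t, f (t - τ) * g τ

/-- `g μ t = t^(μ-1)/Γ(μ)`. -/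
noncomputable def g (μ t : ℝ) : ℝ := t ^ (μ - 1) / Real.Gamma μ


lemma fub1 {t : ℝ} (ht : 0 < t) (f₁ f₂ : ℝ → ℝ) (m₁ : Measurable f₁) (m₂ : Measurable f₂)
    (i₁ : IntervalIntegrable f₁ volume 0 t) (i₂ : IntervalIntegrable f₂ volume 0 t) :
    (∫ τ in (0:ℝ)..t, f₁ (t - τ) * ∫ s in (0:ℝ)..τ, f₂ s)
      = ∫ s in Ioc (0:ℝ) t, (∫ u in (0:ℝ)..(t - s), f₁ u) * f₂ s := by
  set μ := volume.restrict (Ioc (0:ℝ) t) with hμ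
  have i₁' : IntegrableOn f₁ (Ioc 0 t) := (intervalIntegrable_iff_integrableOn_Ioc_of_le ht.le).1 i₁
  have i₂' : IntegrableOn f₂ (Ioc 0 t) := (intervalIntegrable_iff_integrableOn_Ioc_of_le ht.le).1 i₂
  have iref : IntegrableOn (fun τ => f₁ (t - τ)) (Ioc 0 t) := by
    have h := (i₁.comp_sub_left t).symm
    simp only [sub_zero, sub_self] at h
    exact (intervalIntegrable_iff_integrableOn_Ioc_of_le ht.le).1 h
  set S : Set (ℝ × ℝ) := {q | 0 < q.2 ∧ q.2 ≤ q.1} with hS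
  have hSm : MeasurableSet S :=
    (measurableSet_lt measurable_const measurable_snd).inter
      (measurableSet_le measurable_snd measurable_fst)
  set F : ℝ × ℝ → ℝ := S.indicator (fun q => f₁ (t - q.1) * f₂ q.2) with hF
  have hint : Integrable F (μ.prod μ) := (Integrable.mul_prod iref i₂').indicator hSm
  have swap := integral_integral_swap (f := fun τ s => F (τ, s)) (μ := μ) (ν := μ) hint
  have lhs : (∫ τ in (0:ℝ)..t, f₁ (t - τ) * ∫ s in (0:ℝ)..τ, f₂ s)
      = ∫ τ, (∫ s, F (τ, s) ∂μ) ∂μ := by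
    rw [intervalIntegral.integral_of_le ht.le]
    refine setIntegral_congr_fun measurableSet_Ioc fun τ hτ => ?_
    have : ∀ s : ℝ, F (τ, s) = (Ioc (0:ℝ) τ).indicator (fun s => f₁ (t - τ) * f₂ s) s := by
      intro s
      simp only [hF, hS, Set.indicator_apply, mem_setOf_eq, mem_Ioc]
    simp_rw [this]
    rw [integral_indicator measurableSet_Ioc, hμ, Measure.restrict_restrict measurableSet_Ioc,
      inter_eq_left.mpr (Ioc_subset_Ioc le_rfl hτ.2)]
    rw [integral_const_mul, intervalIntegral.integral_of_le hτ.1.le]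
  have rhs : (∫ s, (∫ τ, F (τ, s) ∂μ) ∂μ)
      = ∫ s in Ioc (0:ℝ) t, (∫ u in (0:ℝ)..(t - s), f₁ u) * f₂ s := by
    refine setIntegral_congr_fun measurableSet_Ioc fun s hs => ?_
    have : ∀ τ : ℝ, F (τ, s) = (Ici s).indicator (fun τ => f₁ (t - τ) * f₂ s) τ := by
      intro τ
      simp only [hF, hS, Set.indicator_apply, mem_setOf_eq, mem_Ici]
      by_cases h : s ≤ τ <;> simp [h, hs.1]
    simp_rw [this]
    rw [integral_indicator measurableSet_Ici, hμ, Measure.restrict_restrict measurableSet_Ici]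
    have hset : Ici s ∩ Ioc 0 t = Icc s t := by
      ext x; simp only [mem_inter_iff, mem_Ici, mem_Ioc, mem_Icc]
      constructor
      · rintro ⟨h1, _, h3⟩; exact ⟨h1, h3⟩
      · rintro ⟨h1, h2⟩; exact ⟨h1, lt_of_lt_of_le hs.1 h1, h2⟩
    rw [hset, integral_Icc_eq_integral_Ioc, ← intervalIntegral.integral_of_le hs.2,
      intervalIntegral.integral_mul_const, intervalIntegral.integral_comp_sub_left f₁ t,
      sub_self]
  rw [lhs, swap, rhs]

lemma fub2 {t : ℝ} (ht : 0 < t) (f₁ f₂ : ℝ → ℝ) (m₁ : Measurable f₁) (m₂ : Measurable f₂)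
    (i₁ : IntervalIntegrable f₁ volume 0 t) (i₂ : IntervalIntegrable f₂ volume 0 t) :
    (∫ u in (0:ℝ)..t, ∫ s in (0:ℝ)..u, f₁ (u - s) * f₂ s)
      = ∫ s in Ioc (0:ℝ) t, (∫ u in (0:ℝ)..(t - s), f₁ u) * f₂ s := by
  set μ := volume.restrict (Ioc (0:ℝ) t) with hμ
  have i₂' : IntegrableOn f₂ (Ioc 0 t) := (intervalIntegrable_iff_integrableOn_Ioc_of_le ht.le).1 i₂
  -- G' (s, u) : indicator of 0 < s ≤ u of f₁(u-s) f₂ s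
  set S : Set (ℝ × ℝ) := {p | 0 < p.1 ∧ p.1 ≤ p.2} with hS
  have hSm : MeasurableSet S :=
    (measurableSet_lt measurable_const measurable_fst).inter
      (measurableSet_le measurable_fst measurable_snd)
  set G : ℝ × ℝ → ℝ := S.indicator (fun p => f₁ (p.2 - p.1) * f₂ p.1) with hG
  have hGm : AEStronglyMeasurable G (μ.prod μ) := by
    refine (Measurable.indicator ?_ hSm).aestronglyMeasurable
    exact (m₁.comp (measurable_snd.sub measurable_fst)).mul (m₂.comp measurable_fst)
  -- for s ∈ Ioc 0 t, the slice u ↦ G (s, u)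
  have slice : ∀ s ∈ Ioc (0:ℝ) t, ∀ u : ℝ,
      G (s, u) = (Ici s).indicator (fun u => f₁ (u - s) * f₂ s) u := by
    intro s hs u
    simp only [hG, hS, Set.indicator_apply, mem_setOf_eq, mem_Ici]
    by_cases h : s ≤ u <;> simp [h, hs.1]
  have hset : ∀ s ∈ Ioc (0:ℝ) t, Ici s ∩ Ioc 0 t = Icc s t := by
    intro s hs
    ext x; simp only [mem_inter_iff, mem_Ici, mem_Ioc, mem_Icc]
    exact ⟨fun ⟨h1, _, h3⟩ => ⟨h1, h3⟩, fun ⟨h1, h2⟩ => ⟨h1, lt_of_lt_of_le hs.1 h1, h2⟩⟩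
  -- integrability of each slice
  have sliceInt : ∀ s ∈ Ioc (0:ℝ) t, Integrable (fun u => G (s, u)) μ := by
    intro s hs
    simp_rw [slice s hs]
    rw [hμ, integrable_indicator_iff measurableSet_Ici, IntegrableOn,
      Measure.restrict_restrict measurableSet_Ici, hset s hs]
    have : IntervalIntegrable (fun u => f₁ (u - s)) volume s t := by
      have h0 : IntervalIntegrable f₁ volume 0 (t - s) :=
        i₁.mono_set (by rw [uIcc_of_le (by linarith [hs.1, hs.2] : (0:ℝ) ≤ t - s),
          uIcc_of_le ht.le]; exact Icc_subset_Icc le_rfl (by linarith [hs.1]))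
      simpa using h0.comp_sub_right s
    exact ((intervalIntegrable_iff_integrableOn_Icc_of_le hs.2).1 this).mul_const _
  -- the norm integral bound
  have hintG : Integrable G (μ.prod μ) := by
    rw [integrable_prod_iff hGm]
    constructor
    · filter_upwards [ae_restrict_mem measurableSet_Ioc] with s hs
      exact sliceInt s hs
    · set C := ∫ u in (0:ℝ)..t, ‖f₁ u‖ with hC
      refine Integrable.mono' ((i₂'.norm.const_mul C).mono_measure le_rfl)
        (hGm.norm.integral_prod_right') ?_
      filter_upwards [ae_restrict_mem measurableSet_Ioc] with s hs
      have eq1 : (∫ u, ‖G (s, u)‖ ∂μ) = (∫ u in (0:ℝ)..(t - s), ‖f₁ u‖) * ‖f₂ s‖ := by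
        simp_rw [slice s hs]
        rw [hμ]
        have : ∀ u : ℝ, ‖(Ici s).indicator (fun u => f₁ (u - s) * f₂ s) u‖
            = (Ici s).indicator (fun u => ‖f₁ (u - s)‖ * ‖f₂ s‖) u := by
          intro u
          by_cases h : u ∈ Ici s <;> simp [h, abs_mul]
        simp_rw [this]
        rw [integral_indicator measurableSet_Ici,
          Measure.restrict_restrict measurableSet_Ici, hset s hs,
          integral_Icc_eq_integral_Ioc, ← intervalIntegral.integral_of_le hs.2,
          intervalIntegral.integral_mul_const,
          intervalIntegral.integral_comp_sub_right (fun u => ‖f₁ u‖) s]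
        norm_num
      rw [eq1]
      have hC0 : (∫ u in (0:ℝ)..(t - s), ‖f₁ u‖) ≤ C := by
        rw [hC]
        refine intervalIntegral.integral_mono_interval le_rfl
          (by linarith [hs.2] : (0:ℝ) ≤ t - s) (by linarith [hs.1]) ?_ i₁.norm
        filter_upwards with x using norm_nonneg _
      have h1 : (0:ℝ) ≤ ∫ u in (0:ℝ)..(t - s), ‖f₁ u‖ :=
        intervalIntegral.integral_nonneg (by linarith [hs.2]) fun x _ => norm_nonneg _
      calc ‖(∫ u in (0:ℝ)..(t - s), ‖f₁ u‖) * ‖f₂ s‖‖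
          = (∫ u in (0:ℝ)..(t - s), ‖f₁ u‖) * ‖f₂ s‖ := by
            rw [Real.norm_eq_abs, abs_of_nonneg (mul_nonneg h1 (norm_nonneg _))]
        _ ≤ C * ‖f₂ s‖ := mul_le_mul_of_nonneg_right hC0 (norm_nonneg _)
  have swap := integral_integral_swap (f := fun s u => G (s, u)) (μ := μ) (ν := μ) hintG
  -- LHS: ∫ u ∫ s G (s,u)
  have lhs : (∫ u in (0:ℝ)..t, ∫ s in (0:ℝ)..u, f₁ (u - s) * f₂ s)
      = ∫ u, (∫ s, G (s, u) ∂μ) ∂μ := by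
    rw [intervalIntegral.integral_of_le ht.le]
    refine setIntegral_congr_fun measurableSet_Ioc fun u hu => ?_
    have : ∀ s : ℝ, G (s, u) = (Ioc (0:ℝ) u).indicator (fun s => f₁ (u - s) * f₂ s) s := by
      intro s
      simp only [hG, hS, Set.indicator_apply, mem_setOf_eq, mem_Ioc]
    simp_rw [this]
    rw [integral_indicator measurableSet_Ioc, hμ, Measure.restrict_restrict measurableSet_Ioc,
      inter_eq_left.mpr (Ioc_subset_Ioc le_rfl hu.2), intervalIntegral.integral_of_le hu.1.le]
  have rhs : (∫ s, (∫ u, G (s, u) ∂μ) ∂μ)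
      = ∫ s in Ioc (0:ℝ) t, (∫ u in (0:ℝ)..(t - s), f₁ u) * f₂ s := by
    refine setIntegral_congr_fun measurableSet_Ioc fun s hs => ?_
    simp_rw [slice s hs]
    rw [hμ, integral_indicator measurableSet_Ici,
      Measure.restrict_restrict measurableSet_Ici, hset s hs,
      integral_Icc_eq_integral_Ioc, ← intervalIntegral.integral_of_le hs.2,
      intervalIntegral.integral_mul_const,
      intervalIntegral.integral_comp_sub_right f₁ s]
    norm_num
  rw [lhs, ← swap, rhs]


lemma betaType_intervalIntegrable {a b t : ℝ} (ha : -1 < a) (hb : -1 < b) (ht : 0 < t)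
    (c : ℝ → ℝ) (hc : Continuous c) :
    IntervalIntegrable (fun τ => τ ^ a * (t - τ) ^ b * c τ) volume 0 t := by
  have h1 : IntervalIntegrable (fun τ => τ ^ a * (t - τ) ^ b * c τ) volume 0 (t / 2) := by
    have base : IntervalIntegrable (fun τ : ℝ => τ ^ a) volume 0 (t / 2) :=
      intervalIntegral.intervalIntegrable_rpow' ha
    have cont : ContinuousOn (fun τ : ℝ => (t - τ) ^ b * c τ) (uIcc 0 (t / 2)) := by
      refine ContinuousOn.mul ?_ hc.continuousOn
      refine ContinuousOn.rpow_const (continuousOn_const.sub continuousOn_id) fun x hx => ?_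
      rw [uIcc_of_le (by linarith)] at hx
      left
      have := hx.2
      intro h; nlinarith [hx.1, hx.2]
    have := base.mul_continuousOn cont
    simpa [mul_assoc] using this
  have h2 : IntervalIntegrable (fun τ => τ ^ a * (t - τ) ^ b * c τ) volume (t / 2) t := by
    have base : IntervalIntegrable (fun τ : ℝ => (t - τ) ^ b) volume (t / 2) t := by
      have h0 : IntervalIntegrable (fun x : ℝ => x ^ b) volume 0 (t / 2) :=
        intervalIntegral.intervalIntegrable_rpow' hb
      have h1 := h0.comp_sub_left t
      rw [sub_zero] at h1
      rw [show t - t / 2 = t / 2 by ring] at h1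
      exact h1.symm
    have cont : ContinuousOn (fun τ : ℝ => τ ^ a * c τ) (uIcc (t / 2) t) := by
      refine ContinuousOn.mul ?_ hc.continuousOn
      refine ContinuousOn.rpow_const continuousOn_id fun x hx => ?_
      rw [uIcc_of_le (by linarith)] at hx
      left
      intro h; nlinarith [hx.1, hx.2]
    have := base.mul_continuousOn cont
    have heq : (fun τ => τ ^ a * (t - τ) ^ b * c τ) = fun τ => (t - τ) ^ b * (τ ^ a * c τ) := by
      funext τ; ring
    rw [heq]
    exact this
  exact h1.trans h2

lemma beta_real {α : ℝ} (hα : 0 < α) (hα1 : α < 1) {u : ℝ} (hu : 0 < u) :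
    ∫ τ in (0:ℝ)..u, τ ^ (α - 1) * (u - τ) ^ (-α) = Real.Gamma α * Real.Gamma (1 - α) := by
  have hre : 0 < Complex.re α := by simpa using hα
  have hre' : 0 < Complex.re (1 - α : ℝ) := by simpa using sub_pos.mpr hα1
  have hbeta : Complex.betaIntegral α (1 - α : ℝ) =
      Complex.Gamma α * Complex.Gamma (1 - α : ℝ) := by
    have h := Complex.Gamma_mul_Gamma_eq_betaIntegral hre hre'
    have h1 : (α : ℂ) + ((1 - α : ℝ) : ℂ) = 1 := by push_cast; ring
    rw [h1, Complex.Gamma_one, one_mul] at h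
    exact h.symm
  have hs := Complex.betaIntegral_scaled (α : ℂ) ((1 - α : ℝ) : ℂ) hu
  have h0 : ((α : ℂ) + ((1 - α : ℝ) : ℂ) - 1) = 0 := by push_cast; ring
  rw [h0, Complex.cpow_zero, one_mul, hbeta] at hs
  have key : ∫ x in (0:ℝ)..u, ((x ^ (α - 1) * (u - x) ^ (-α) : ℝ) : ℂ) =
      Complex.Gamma α * Complex.Gamma (1 - α : ℝ) := by
    rw [← hs]
    rw [intervalIntegral.integral_of_le hu.le, intervalIntegral.integral_of_le hu.le]
    refine setIntegral_congr_fun measurableSet_Ioc fun x hx => ?_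
    have hx0 : (0:ℝ) ≤ x := hx.1.le
    have hux : (0:ℝ) ≤ u - x := by linarith [hx.2]
    rw [Complex.ofReal_mul, Complex.ofReal_cpow hx0, Complex.ofReal_cpow hux]
    push_cast
    ring_nf
  rw [intervalIntegral.integral_ofReal] at key
  rw [Complex.Gamma_ofReal, Complex.Gamma_ofReal, ← Complex.ofReal_mul] at key
  exact_mod_cast key

lemma sonine {α γ : ℝ} (hα : 0 < α) (hα1 : α < 1) {u : ℝ} (hu : 0 < u) :
    ∫ τ in (0:ℝ)..u,
      (g (1 - α) (u - τ) * Real.exp (-(γ * (u - τ)))) * (g α τ * Real.exp (-(γ * τ)))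
      = Real.exp (-(γ * u)) := by
  have hΓα : 0 < Real.Gamma α := Real.Gamma_pos_of_pos hα
  have hΓα' : 0 < Real.Gamma (1 - α) := Real.Gamma_pos_of_pos (by linarith)
  have heq : ∀ τ : ℝ,
      (g (1 - α) (u - τ) * Real.exp (-(γ * (u - τ)))) * (g α τ * Real.exp (-(γ * τ)))
      = (Real.exp (-(γ * u)) / (Real.Gamma α * Real.Gamma (1 - α)))
          * (τ ^ (α - 1) * (u - τ) ^ (-α)) := by
    intro τ
    have he : Real.exp (-(γ * (u - τ))) * Real.exp (-(γ * τ)) = Real.exp (-(γ * u)) := by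
      rw [← Real.exp_add]; congr 1; ring
    have hpow : (1 - α) - 1 = -α := by ring
    simp only [g, hpow]
    rw [show ((u - τ) ^ (-α) / Real.Gamma (1 - α) * Real.exp (-(γ * (u - τ)))) *
        (τ ^ (α - 1) / Real.Gamma α * Real.exp (-(γ * τ)))
        = (Real.exp (-(γ * (u - τ))) * Real.exp (-(γ * τ)))
            / (Real.Gamma α * Real.Gamma (1 - α)) * (τ ^ (α - 1) * (u - τ) ^ (-α)) from by ring,
      he]
  simp_rw [heq]
  rw [intervalIntegral.integral_const_mul, beta_real hα hα1 hu]
  field_simp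

theorem stmt_8 (α γ : ℝ) (hα : 0 < α) (hα1 : α < 1) (hγ : 0 < γ)
    (k l : ℝ → ℝ)
    (hk : ∀ t : ℝ, k t = g (1 - α) t * Real.exp (-(γ * t)))
    (hl : ∀ t : ℝ, l t = g α t * Real.exp (-(γ * t))
        + γ * ∫ τ in (0:ℝ)..t, g α τ * Real.exp (-(γ * τ))) :
    ∀ t ∈ Ioi (0:ℝ), lconv k l t = 1 := by
  intro t ht
  rw [mem_Ioi] at ht
  have hmk : Measurable k := by
    rw [funext hk]; simp only [g]; fun_prop
  have hmh : Measurable (fun τ : ℝ => g α τ * Real.exp (-(γ * τ))) := by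
    simp only [g]; fun_prop
  -- interval integrability of the tempered kernels
  have hih : IntervalIntegrable (fun τ : ℝ => g α τ * Real.exp (-(γ * τ))) volume 0 t := by
    simp only [g]
    have base : IntervalIntegrable (fun τ : ℝ => τ ^ (α - 1)) volume 0 t :=
      intervalIntegral.intervalIntegrable_rpow' (by linarith)
    have hmul := base.mul_continuousOn
      (Continuous.continuousOn (by continuity : Continuous fun τ : ℝ => Real.exp (-(γ * τ))))
    have heq : (fun τ : ℝ => τ ^ (α - 1) / Real.Gamma α * Real.exp (-(γ * τ)))
        = fun τ : ℝ => (τ ^ (α - 1) * Real.exp (-(γ * τ))) / Real.Gamma α := by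
      funext τ; ring
    rw [heq]
    exact hmul.div_const _
  have hik : IntervalIntegrable k volume 0 t := by
    rw [funext hk]; simp only [g]
    have base : IntervalIntegrable (fun τ : ℝ => τ ^ (1 - α - 1)) volume 0 t :=
      intervalIntegral.intervalIntegrable_rpow' (by linarith)
    have hmul := base.mul_continuousOn
      (Continuous.continuousOn (by continuity : Continuous fun τ : ℝ => Real.exp (-(γ * τ))))
    have heq : (fun τ : ℝ => τ ^ (1 - α - 1) / Real.Gamma (1 - α) * Real.exp (-(γ * τ)))
        = fun τ : ℝ => (τ ^ (1 - α - 1) * Real.exp (-(γ * τ))) / Real.Gamma (1 - α) := by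
      funext τ; ring
    rw [heq]
    exact hmul.div_const _
  -- integrability of the beta-type product
  have hA : IntervalIntegrable
      (fun τ => k (t - τ) * (g α τ * Real.exp (-(γ * τ)))) volume 0 t := by
    have heq : (fun τ => k (t - τ) * (g α τ * Real.exp (-(γ * τ))))
        = fun τ => τ ^ (α - 1) * (t - τ) ^ (-α) *
            ((Real.exp (-(γ * (t - τ))) * Real.exp (-(γ * τ)))
              / (Real.Gamma (1 - α) * Real.Gamma α)) := by
      funext τ
      rw [hk, g, g, show (1 : ℝ) - α - 1 = -α by ring]
      ring
    rw [heq]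
    exact betaType_intervalIntegrable (by linarith) (by linarith) ht _ (by continuity)
  -- continuity of the primitive of h
  have hLc : ContinuousOn (fun τ : ℝ => ∫ s in (0:ℝ)..τ, g α s * Real.exp (-(γ * s)))
      (uIcc 0 t) := by
    rw [uIcc_of_le ht.le]
    have hint : IntegrableOn (fun s : ℝ => g α s * Real.exp (-(γ * s))) (Icc 0 t) :=
      (intervalIntegrable_iff_integrableOn_Icc_of_le ht.le).1 hih
    refine (intervalIntegral.continuousOn_primitive hint).congr fun x hx => ?_
    rw [intervalIntegral.integral_of_le hx.1]
  have hB : IntervalIntegrable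
      (fun τ => k (t - τ) *
        (γ * ∫ s in (0:ℝ)..τ, g α s * Real.exp (-(γ * s)))) volume 0 t := by
    have hrefl : IntervalIntegrable (fun τ => k (t - τ)) volume 0 t := by
      have h1 := hik.comp_sub_left t
      rw [sub_zero, sub_self] at h1
      exact h1.symm
    exact hrefl.mul_continuousOn (continuousOn_const.mul hLc)
  -- split the convolution
  have split : lconv k l t
      = (∫ τ in (0:ℝ)..t, k (t - τ) * (g α τ * Real.exp (-(γ * τ))))
        + ∫ τ in (0:ℝ)..t, k (t - τ) *
            (γ * ∫ s in (0:ℝ)..τ, g α s * Real.exp (-(γ * s))) := by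
    rw [lconv, ← intervalIntegral.integral_add hA hB]
    congr 1
    funext τ
    rw [hl τ]
    ring
  -- first term: the Sonine identity
  have first : (∫ τ in (0:ℝ)..t, k (t - τ) * (g α τ * Real.exp (-(γ * τ))))
      = Real.exp (-(γ * t)) := by
    rw [← sonine hα hα1 ht (γ := γ)]
    congr 1
    funext τ
    rw [hk]
  -- second term, via the two Fubini lemmas
  have second : (∫ τ in (0:ℝ)..t, k (t - τ) *
        (γ * ∫ s in (0:ℝ)..τ, g α s * Real.exp (-(γ * s))))
      = γ * ∫ u in (0:ℝ)..t, Real.exp (-(γ * u)) := by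
    have e1 : (∫ τ in (0:ℝ)..t, k (t - τ) *
          (γ * ∫ s in (0:ℝ)..τ, g α s * Real.exp (-(γ * s))))
        = γ * ∫ τ in (0:ℝ)..t, k (t - τ) *
            ∫ s in (0:ℝ)..τ, g α s * Real.exp (-(γ * s)) := by
      rw [← intervalIntegral.integral_const_mul]
      congr 1; funext τ; ring
    rw [e1, fub1 ht k _ hmk hmh hik hih, ← fub2 ht k _ hmk hmh hik hih]
    congr 1
    rw [intervalIntegral.integral_of_le ht.le, intervalIntegral.integral_of_le ht.le]
    refine setIntegral_congr_fun measurableSet_Ioc fun u hu => ?_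
    rw [← sonine hα hα1 hu.1 (γ := γ)]
    congr 1
    funext s
    rw [hk]
  -- the elementary exponential integral
  have fourth : (∫ u in (0:ℝ)..t, Real.exp (-(γ * u)))
      = (1 - Real.exp (-(γ * t))) / γ := by
    have hderiv : ∀ u ∈ uIcc (0:ℝ) t,
        HasDerivAt (fun u => -Real.exp (-(γ * u)) / γ) (Real.exp (-(γ * u))) u := by
      intro u _
      have h1 : HasDerivAt (fun u : ℝ => -(γ * u)) (-γ) u := by
        exact ((hasDerivAt_id' u).const_mul γ).neg.congr_deriv (by ring)
      have h3 := (h1.exp.neg).div_const γ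
      refine h3.congr_deriv ?_
      field_simp
    have hint : IntervalIntegrable (fun u : ℝ => Real.exp (-(γ * u))) volume 0 t :=
      (Continuous.intervalIntegrable (by continuity) _ _)
    rw [intervalIntegral.integral_eq_sub_of_hasDerivAt hderiv hint]
    rw [mul_zero, neg_zero, Real.exp_zero]
    field_simp
    ring
  rw [split, first, second, fourth]
  field_simp
  ring
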